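/- Let {E_i}_{i=1}^n be a POVM on ℂ^d. Then Σ_{l,m=1}^n √(tr(E_l) · tr(E_m)) · tr(√E_l √E_m) ≥ d. (Consequently, the Rayleigh quotient of the Gram matrix S with entries S_{lm} = tr(√E_l √E_m) at the vector with entries √(tr E_l)/√d is at least 1, so the largest eigenvalue of S is at least 1.) -/

import Mathlib

open Matrix BigOperators
open scoped ComplexOrder

noncomputable def Matrix.PosSemidef.sqrt {n 𝕜 : Type*} [Fintype n] [DecidableEq n] [RCLike 𝕜]
    {A : Matrix n n 𝕜} (hA : A.PosSemidef) : Matrix n n 𝕜 :=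
  hA.1.eigenvectorUnitary.1 * diagonal ((↑) ∘ Real.sqrt ∘ hA.1.eigenvalues) *
    (star hA.1.eigenvectorUnitary : Matrix n n 𝕜)

private lemma psd_sqrt_posSemidef' {d : ℕ} {A : Matrix (Fin d) (Fin d) ℂ} (hA : A.PosSemidef) :
    hA.sqrt.PosSemidef := by
  unfold Matrix.PosSemidef.sqrt
  have h1 := (posSemidef_diagonal_iff (d := ((↑) ∘ Real.sqrt ∘ hA.1.eigenvalues : Fin d → ℂ))).mpr
    (fun i => by simp [Real.sqrt_nonneg])
  have h2 := h1.mul_mul_conjTranspose_same (hA.1.eigenvectorUnitary : Matrix (Fin d) (Fin d) ℂ)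
  simpa [Matrix.star_eq_conjTranspose] using h2

private lemma psd_sqrt_mul_self' {d : ℕ} {A : Matrix (Fin d) (Fin d) ℂ} (hA : A.PosSemidef) :
    hA.sqrt * hA.sqrt = A := by
  unfold Matrix.PosSemidef.sqrt
  have hCC : (star hA.1.eigenvectorUnitary : Matrix (Fin d) (Fin d) ℂ) *
      hA.1.eigenvectorUnitary.1 = 1 := by simp
  have hEE : diagonal (RCLike.ofReal ∘ Real.sqrt ∘ hA.1.eigenvalues : Fin d → ℂ) *
      diagonal (RCLike.ofReal ∘ Real.sqrt ∘ hA.1.eigenvalues : Fin d → ℂ) =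
      diagonal (RCLike.ofReal ∘ hA.1.eigenvalues : Fin d → ℂ) := by
    rw [diagonal_mul_diagonal]
    congr 1
    funext v
    simp [← Complex.ofReal_mul, Real.mul_self_sqrt (hA.eigenvalues_nonneg v)]
  have hs := hA.1.spectral_theorem
  rw [Unitary.conjStarAlgAut_apply] at hs
  calc _ = hA.1.eigenvectorUnitary.1 * (diagonal (RCLike.ofReal ∘ Real.sqrt ∘ hA.1.eigenvalues : Fin d → ℂ) *
      ((star hA.1.eigenvectorUnitary : Matrix (Fin d) (Fin d) ℂ) * hA.1.eigenvectorUnitary.1) *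
      diagonal (RCLike.ofReal ∘ Real.sqrt ∘ hA.1.eigenvalues : Fin d → ℂ)) *
      (star hA.1.eigenvectorUnitary : Matrix (Fin d) (Fin d) ℂ) := by simp only [mul_assoc]
    _ = A := by rw [hCC, Matrix.mul_one, hEE]; exact hs.symm

private lemma star_mul_self_re (z : ℂ) : (star z * z).re = ‖z‖ ^ 2 := by
  simp [Complex.star_def, ← Complex.normSq_eq_conj_mul_self, Complex.normSq_eq_norm_sq,
    ← Complex.ofReal_pow]

private lemma mul_star_self_re (z : ℂ) : (z * star z).re = Complex.normSq z := by
  simp [Complex.star_def, Complex.mul_conj]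

private lemma psd_entry_sq' {d : ℕ} {M : Matrix (Fin d) (Fin d) ℂ} (hM : M.PosSemidef)
    (i j : Fin d) : Complex.normSq (M i j) ≤ (M i i).re * (M j j).re := by
  obtain ⟨C, hC⟩ : ∃ C : Matrix (Fin d) (Fin d) ℂ, M = Cᴴ * C :=
    ⟨hM.sqrt, by rw [(psd_sqrt_posSemidef' hM).isHermitian.eq, psd_sqrt_mul_self']⟩
  have hdiag : ∀ k : Fin d, (M k k).re = ∑ p, ‖C p k‖ ^ 2 := by
    intro k
    rw [hC]
    simp only [Matrix.mul_apply, Complex.re_sum, Matrix.conjTranspose_apply]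
    exact Finset.sum_congr rfl fun p _ => star_mul_self_re _
  have habs : ‖M i j‖ ≤ ∑ p, ‖C p i‖ * ‖C p j‖ := by
    rw [hC, Matrix.mul_apply]
    refine le_trans (norm_sum_le _ _) (Finset.sum_le_sum fun p _ => ?_)
    rw [Matrix.conjTranspose_apply, norm_mul, norm_star]
  have hcs := Finset.sum_mul_sq_le_sq_mul_sq Finset.univ (fun p => ‖C p i‖) (fun p => ‖C p j‖)
  have h1 : Complex.normSq (M i j) = ‖M i j‖ ^ 2 := by
    rw [Complex.sq_norm]
  rw [h1, hdiag, hdiag]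
  calc ‖M i j‖ ^ 2 ≤ (∑ p, ‖C p i‖ * ‖C p j‖) ^ 2 := by
        apply pow_le_pow_left₀ (norm_nonneg _) habs
    _ ≤ (∑ p, ‖C p i‖ ^ 2) * ∑ p, ‖C p j‖ ^ 2 := hcs

private lemma psd_diag_nonneg' {d : ℕ} {M : Matrix (Fin d) (Fin d) ℂ} (hM : M.PosSemidef)
    (i : Fin d) : 0 ≤ (M i i).re := by
  obtain ⟨C, hC⟩ : ∃ C : Matrix (Fin d) (Fin d) ℂ, M = Cᴴ * C :=
    ⟨hM.sqrt, by rw [(psd_sqrt_posSemidef' hM).isHermitian.eq, psd_sqrt_mul_self']⟩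
  rw [hC]
  simp only [Matrix.mul_apply, Complex.re_sum, Matrix.conjTranspose_apply]
  exact Finset.sum_nonneg fun p _ => by rw [star_mul_self_re]; positivity

/-- For a POVM `{E_i}` on `ℂ^d`,
`Σ_{l,m} √(tr(E_l)·tr(E_m)) · tr(√E_l √E_m) ≥ d`. -/
theorem gram_rayleigh_quotient_ge
    (d n : ℕ) (E : Fin n → Matrix (Fin d) (Fin d) ℂ)
    (hE : ∀ i, (E i).PosSemidef)
    (hsum : ∑ i, E i = 1) :
    (d : ℝ) ≤ ∑ l, ∑ m, Real.sqrt ((E l).trace.re * (E m).trace.re) *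
      ((hE l).sqrt * (hE m).sqrt).trace.re := by
  set B : Fin n → Matrix (Fin d) (Fin d) ℂ := fun l => (hE l).sqrt with hBdef
  have hB : ∀ l, (B l).PosSemidef := fun l => psd_sqrt_posSemidef' (hE l)
  have hBB : ∀ l, B l * B l = E l := fun l => psd_sqrt_mul_self' (hE l)
  have hretr : ∀ (M : Matrix (Fin d) (Fin d) ℂ), M.trace.re = ∑ i, (M i i).re := by
    intro M; simp [Matrix.trace, Matrix.diag, Complex.re_sum]
  have ht_nonneg : ∀ l, 0 ≤ (E l).trace.re := by
    intro l
    rw [hretr]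
    exact Finset.sum_nonneg fun i _ => psd_diag_nonneg' (hE l) i
  have hs_nonneg : ∀ l, 0 ≤ (B l).trace.re := by
    intro l
    rw [hretr]
    exact Finset.sum_nonneg fun i _ => psd_diag_nonneg' (hB l) i
  have hherm : ∀ (l : Fin n) (i j : Fin d), B l j i = star (B l i j) := by
    intro l i j
    conv_lhs => rw [← (hB l).isHermitian]
    simp [Matrix.conjTranspose_apply]
  -- trace of sqrt dominates sqrt of trace
  have htr_sqrt : ∀ l, Real.sqrt ((E l).trace.re) ≤ (B l).trace.re := by
    intro l
    have h1 : (E l).trace.re ≤ ((B l).trace.re) ^ 2 := by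
      rw [hretr, hretr]
      have hEd : ∀ i, (E l i i).re = ∑ j, Complex.normSq (B l i j) := by
        intro i
        rw [← hBB l]
        simp only [Matrix.mul_apply, Complex.re_sum]
        exact Finset.sum_congr rfl fun j _ => by rw [hherm l i j, mul_star_self_re]
      calc ∑ i, (E l i i).re = ∑ i, ∑ j, Complex.normSq (B l i j) :=
            Finset.sum_congr rfl fun i _ => hEd i
        _ ≤ ∑ i, ∑ j, (B l i i).re * (B l j j).re :=
            Finset.sum_le_sum fun i _ => Finset.sum_le_sum fun j _ => psd_entry_sq' (hB l) i j
        _ = (∑ i, (B l i i).re) ^ 2 := by rw [sq, Finset.sum_mul_sum]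
    calc Real.sqrt ((E l).trace.re) ≤ Real.sqrt (((B l).trace.re) ^ 2) := Real.sqrt_le_sqrt h1
      _ = (B l).trace.re := Real.sqrt_sq (hs_nonneg l)
  have hsum_t : ∑ l, (E l).trace.re = (d : ℝ) := by
    have h : ∑ l, (E l).trace = (d : ℂ) := by
      rw [← Matrix.trace_sum, hsum, Matrix.trace_one]
      simp
    calc ∑ l, (E l).trace.re = (∑ l, (E l).trace).re := (Complex.re_sum _ _).symm
      _ = (d : ℝ) := by rw [h]; simp
  -- the matrix A
  set A : Matrix (Fin d) (Fin d) ℂ := ∑ l, (Real.sqrt ((E l).trace.re) : ℂ) • B l with hAdef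
  have hA_apply : ∀ i j, A i j = ∑ l, (Real.sqrt ((E l).trace.re) : ℂ) * B l i j := by
    intro i j
    rw [hAdef]
    simp [Matrix.sum_apply]
  have hA_herm : ∀ i j, A j i = star (A i j) := by
    intro i j
    rw [hA_apply, hA_apply, star_sum]
    refine Finset.sum_congr rfl fun l _ => ?_
    simp [hherm l i j, star_mul', Complex.star_def, Complex.conj_ofReal, mul_comm]
  have hAdiag_re : ∀ i, (A i i).re = ∑ l, Real.sqrt ((E l).trace.re) * (B l i i).re := by
    intro i
    rw [hA_apply, Complex.re_sum]
    exact Finset.sum_congr rfl fun l _ => by simp [Complex.re_ofReal_mul]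
  -- LHS equals tr(A*A).re
  have hLHS : (A * A).trace.re =
      ∑ l, ∑ m, Real.sqrt ((E l).trace.re * (E m).trace.re) * (B l * B m).trace.re := by
    have hAA : A * A = ∑ l, ∑ m,
        ((Real.sqrt ((E l).trace.re) * Real.sqrt ((E m).trace.re) : ℝ) : ℂ) • (B l * B m) := by
      rw [hAdef, Finset.sum_mul_sum]
      refine Finset.sum_congr rfl fun l _ => Finset.sum_congr rfl fun m _ => ?_
      rw [Matrix.smul_mul, Matrix.mul_smul, smul_smul]
      push_cast
      ring_nf
    rw [hAA, Matrix.trace_sum, Complex.re_sum]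
    refine Finset.sum_congr rfl fun l _ => ?_
    rw [Matrix.trace_sum, Complex.re_sum]
    refine Finset.sum_congr rfl fun m _ => ?_
    rw [Matrix.trace_smul, Real.sqrt_mul (ht_nonneg l)]
    simp [smul_eq_mul, Complex.re_ofReal_mul]
  -- trace of A is at least d
  have htrA : (d : ℝ) ≤ ∑ i, (A i i).re := by
    have h1 : ∑ i, (A i i).re = ∑ l, Real.sqrt ((E l).trace.re) * (B l).trace.re := by
      calc ∑ i, (A i i).re
          = ∑ i, ∑ l, Real.sqrt ((E l).trace.re) * (B l i i).re :=
            Finset.sum_congr rfl fun i _ => hAdiag_re i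
        _ = ∑ l, ∑ i, Real.sqrt ((E l).trace.re) * (B l i i).re := Finset.sum_comm
        _ = ∑ l, Real.sqrt ((E l).trace.re) * (B l).trace.re := by
            refine Finset.sum_congr rfl fun l _ => ?_
            rw [hretr (B _), Finset.mul_sum]
            
    rw [h1, ← hsum_t]
    refine Finset.sum_le_sum fun l _ => ?_
    calc (E l).trace.re = Real.sqrt ((E l).trace.re) * Real.sqrt ((E l).trace.re) :=
          (Real.mul_self_sqrt (ht_nonneg l)).symm
      _ ≤ Real.sqrt ((E l).trace.re) * (B l).trace.re :=
          mul_le_mul_of_nonneg_left (htr_sqrt l) (Real.sqrt_nonneg _)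
  -- diagonal squares bounded by tr(A*A)
  have hdiagsq : ∑ i, ((A i i).re) ^ 2 ≤ (A * A).trace.re := by
    have h1 : (A * A).trace.re = ∑ i, ∑ j, Complex.normSq (A i j) := by
      rw [hretr]
      refine Finset.sum_congr rfl fun i _ => ?_
      rw [Matrix.mul_apply, Complex.re_sum]
      exact Finset.sum_congr rfl fun j _ => by rw [hA_herm i j, mul_star_self_re]
    rw [h1]
    refine Finset.sum_le_sum fun i _ => ?_
    calc ((A i i).re) ^ 2 ≤ Complex.normSq (A i i) := by
          simp [Complex.normSq_apply, sq]
          nlinarith [sq_nonneg ((A i i).im)]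
      _ ≤ ∑ j, Complex.normSq (A i j) :=
          Finset.single_le_sum (fun j _ => Complex.normSq_nonneg _) (Finset.mem_univ i)
  have hcard : ((Finset.univ : Finset (Fin d)).card : ℝ) = (d : ℝ) := by simp
  have hCS : (∑ i, (A i i).re) ^ 2 ≤ (d : ℝ) * ∑ i, ((A i i).re) ^ 2 := by
    have := sq_sum_le_card_mul_sum_sq (s := (Finset.univ : Finset (Fin d)))
      (f := fun i => (A i i).re)
    rwa [hcard] at this
  have hnn : (0 : ℝ) ≤ (A * A).trace.re :=
    le_trans (Finset.sum_nonneg fun i _ => sq_nonneg _) hdiagsq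
  have key : (d : ℝ) * (d : ℝ) ≤ (d : ℝ) * (A * A).trace.re := by
    have h0 : (0 : ℝ) ≤ (d : ℝ) := Nat.cast_nonneg d
    calc (d : ℝ) * (d : ℝ) ≤ (∑ i, (A i i).re) * (∑ i, (A i i).re) :=
          mul_le_mul htrA htrA h0 (le_trans h0 htrA)
      _ = (∑ i, (A i i).re) ^ 2 := (sq _).symm
      _ ≤ (d : ℝ) * ∑ i, ((A i i).re) ^ 2 := hCS
      _ ≤ (d : ℝ) * (A * A).trace.re :=
          mul_le_mul_of_nonneg_left hdiagsq h0
  rw [← hLHS]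
  rcases Nat.eq_zero_or_pos d with hd | hd
  · have hd0 : (d : ℝ) = 0 := by simp [hd]
    linarith
  · have hdpos : (0 : ℝ) < (d : ℝ) := by exact_mod_cast hd
    exact le_of_mul_le_mul_left key hdpos
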